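/- Tensor identity: for an isotropic probability measure p on ℝⁿ with finite sixth moments and symmetric matrices A, B, letting Δᵢ = E_{x∼p}[x xᵀ xᵢ], one has T_p(A,B,I) := E_{x,y∼p}[(xᵀAy)(xᵀBy)(xᵀy)] = Σᵢ Tr(A Δᵢ B Δᵢ), where x, y are independent. -/
import Mathlib


open MeasureTheory Matrix

/-- Tensor identity: for a mean-zero probability measure `p` on `ℝⁿ` with finite
sixth moments, symmetric matrices `A, B`, and `Δᵢ = E_{x∼p}[x xᵀ xᵢ]`, one has
`T_p(A,B,I) = E_{x,y∼p}[(xᵀAy)(xᵀBy)(xᵀy)] = Σᵢ Tr(A Δᵢ B Δᵢ)` with `x, y`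
independent. -/
theorem tensor_identity (n : ℕ) (p : Measure (Fin n → ℝ)) [IsProbabilityMeasure p]
    (hmean : ∫ x, x ∂p = 0)
    (hmom6 : Integrable (fun x : Fin n → ℝ => ‖x‖ ^ 6) p)
    (A B : Matrix (Fin n) (Fin n) ℝ) (hA : A.IsSymm) (hB : B.IsSymm)
    (Δ : Fin n → Matrix (Fin n) (Fin n) ℝ)
    (hΔ : ∀ i j k : Fin n, Δ i j k = ∫ x, x j * x k * x i ∂p) :
    ∫ x, ∫ y, (x ⬝ᵥ A *ᵥ y) * (x ⬝ᵥ B *ᵥ y) * (x ⬝ᵥ y) ∂p ∂p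
      = ∑ i : Fin n, (A * Δ i * B * Δ i).trace := by
  -- integrability of third-degree monomials
  have hint3 : ∀ a b c : Fin n, Integrable (fun x : Fin n → ℝ => x a * x b * x c) p := by
    intro a b c
    have hg : Integrable (fun x : Fin n → ℝ => 1 + ‖x‖ ^ 6) p :=
      (integrable_const 1).add hmom6
    refine hg.mono' ?_ ?_
    · exact (((continuous_apply a).mul (continuous_apply b)).mul
        (continuous_apply c)).aestronglyMeasurable
    · filter_upwards with x
      have ha : |x a| ≤ ‖x‖ := by simpa using norm_le_pi_norm x a
      have hb : |x b| ≤ ‖x‖ := by simpa using norm_le_pi_norm x b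
      have hc : |x c| ≤ ‖x‖ := by simpa using norm_le_pi_norm x c
      have h0 : (0:ℝ) ≤ ‖x‖ := norm_nonneg x
      have h1 : ‖x a * x b * x c‖ ≤ ‖x‖ ^ 3 := by
        rw [Real.norm_eq_abs, abs_mul, abs_mul]
        calc |x a| * |x b| * |x c| ≤ ‖x‖ * ‖x‖ * ‖x‖ := by
              gcongr <;> positivity
          _ = ‖x‖ ^ 3 := by ring
      have h2 : ‖x‖ ^ 3 ≤ 1 + ‖x‖ ^ 6 := by nlinarith [sq_nonneg (‖x‖^3 - 1)]
      linarith
  have hsym : ∀ c a b : Fin n, Δ c a b = Δ c b a := by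
    intro c a b
    rw [hΔ, hΔ]
    congr 1
    funext x
    ring
  -- pointwise expansion; components of t are (i, k, b, j, a)
  have expand : ∀ x y : Fin n → ℝ,
      (x ⬝ᵥ A *ᵥ y) * (x ⬝ᵥ B *ᵥ y) * (x ⬝ᵥ y)
        = ∑ t : Fin n × Fin n × Fin n × Fin n × Fin n,
            (A t.2.2.2.1 t.2.2.2.2 * B t.2.1 t.2.2.1
              * (x t.2.2.2.1 * x t.2.1 * x t.1))
              * (y t.2.2.2.2 * y t.2.2.1 * y t.1) := by
    intro x y
    simp only [dotProduct, Matrix.mulVec, Fintype.sum_prod_type,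
      Finset.sum_mul, Finset.mul_sum]
    refine Finset.sum_congr rfl fun i _ => Finset.sum_congr rfl fun k _ =>
      Finset.sum_congr rfl fun b _ => Finset.sum_congr rfl fun j _ =>
      Finset.sum_congr rfl fun a _ => by ring
  -- inner integral
  have inner : ∀ x : Fin n → ℝ,
      ∫ y, (x ⬝ᵥ A *ᵥ y) * (x ⬝ᵥ B *ᵥ y) * (x ⬝ᵥ y) ∂p
        = ∑ t : Fin n × Fin n × Fin n × Fin n × Fin n,
            (A t.2.2.2.1 t.2.2.2.2 * B t.2.1 t.2.2.1 * Δ t.1 t.2.2.2.2 t.2.2.1)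
              * (x t.2.2.2.1 * x t.2.1 * x t.1) := by
    intro x
    simp_rw [expand x]
    rw [integral_finset_sum _ (fun t _ => (hint3 _ _ _).const_mul _)]
    refine Finset.sum_congr rfl fun t _ => ?_
    rw [integral_const_mul, ← hΔ]
    ring
  simp_rw [inner]
  rw [integral_finset_sum _ (fun t _ => (hint3 _ _ _).const_mul _)]
  have step : ∀ t : Fin n × Fin n × Fin n × Fin n × Fin n,
      ∫ x, (A t.2.2.2.1 t.2.2.2.2 * B t.2.1 t.2.2.1 * Δ t.1 t.2.2.2.2 t.2.2.1)
          * (x t.2.2.2.1 * x t.2.1 * x t.1) ∂p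
        = A t.2.2.2.1 t.2.2.2.2 * B t.2.1 t.2.2.1 * Δ t.1 t.2.2.2.2 t.2.2.1
            * Δ t.1 t.2.2.2.1 t.2.1 := by
    intro t
    rw [integral_const_mul, ← hΔ]
  simp_rw [step]
  -- now pure algebra
  simp only [Fintype.sum_prod_type]
  refine Finset.sum_congr rfl fun i _ => ?_
  calc (∑ k : Fin n, ∑ b : Fin n, ∑ j : Fin n, ∑ a : Fin n,
          A j a * B k b * Δ i a b * Δ i j k)
      = ∑ k : Fin n, ∑ j : Fin n, ∑ b : Fin n, ∑ a : Fin n,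
          A j a * B k b * Δ i a b * Δ i j k :=
        Finset.sum_congr rfl fun k _ => Finset.sum_comm
    _ = ∑ j : Fin n, ∑ k : Fin n, ∑ b : Fin n, ∑ a : Fin n,
          A j a * B k b * Δ i a b * Δ i j k := Finset.sum_comm
    _ = (A * Δ i * B * Δ i).trace := by
        simp only [Matrix.trace, Matrix.diag_apply, Matrix.mul_apply,
          Finset.sum_mul, Finset.mul_sum]
        refine Finset.sum_congr rfl fun j _ => Finset.sum_congr rfl fun k _ =>
          Finset.sum_congr rfl fun b _ => Finset.sum_congr rfl fun a _ => ?_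
        rw [hsym i k j, hB.apply k b]
        ring
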